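/- arXiv:1309.0535 — 2 statements merged into one kernel-verified Lean document; each statement's English description precedes it below -/
import Mathlib

section
/- The symmetric rigidity matrix of a weighted framework in R^3 is similar, via a permutation of rows and columns, to the weighted-Laplacian-like matrix (I_3 ⊗ E(G)W) Q(p) (I_3 ⊗ W E(G)^T), where Q(p) is the 3m×3m block matrix with (s,t) block Q_s Q_t for s,t ∈ {x,y,z}. -/
open Matrix

/-- The rigidity matrix of a framework in ℝ³. -/
noncomputable def rigidityMatrix (n m : ℕ) (u v : Fin m → Fin n)
    (p : Fin n → Fin 3 → ℝ) : Matrix (Fin m) (Fin n × Fin 3) ℝ :=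
  Matrix.of fun k is =>
    if is.1 = u k then p (u k) is.2 - p (v k) is.2
    else if is.1 = v k then p (v k) is.2 - p (u k) is.2
    else 0

/-- The weighted rigidity matrix `R(p,W) = W ⬝ R(p)`. -/
noncomputable def weightedRigidityMatrix (n m : ℕ) (u v : Fin m → Fin n)
    (p : Fin n → Fin 3 → ℝ) (w : Fin m → ℝ) : Matrix (Fin m) (Fin n × Fin 3) ℝ :=
  Matrix.diagonal w * rigidityMatrix n m u v p

/-- Oriented incidence matrix of the graph with edge `k` directed from `u k` to `v k`. -/
noncomputable def incidence (n m : ℕ) (u v : Fin m → Fin n) : Matrix (Fin n) (Fin m) ℝ :=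
  Matrix.of fun i k => if i = u k then 1 else if i = v k then -1 else 0

/-- `[Q_s]_{kk} = p_i^s - p_j^s` for edge `e_k = (v_i, v_j)`. -/
noncomputable def edgeDiff (n m : ℕ) (u v : Fin m → Fin n) (p : Fin n → Fin 3 → ℝ)
    (s : Fin 3) (k : Fin m) : ℝ := p (u k) s - p (v k) s

/-- The weighted-Laplacian-like matrix `(I₃ ⊗ E(G)W) Q(p) (I₃ ⊗ W E(G)ᵀ)`, where the
`(s,t)` block of `Q(p)` is the diagonal matrix `Q_s Q_t`. -/
noncomputable def weightedLapForm (n m : ℕ) (u v : Fin m → Fin n)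
    (p : Fin n → Fin 3 → ℝ) (w : Fin m → ℝ) :
    Matrix (Fin 3 × Fin n) (Fin 3 × Fin n) ℝ :=
  Matrix.of fun si tj => ∑ k : Fin m,
    (incidence n m u v si.2 k * w k) *
      (edgeDiff n m u v p si.1 k * edgeDiff n m u v p tj.1 k) *
        (w k * incidence n m u v tj.2 k)

lemma rigidity_eq_inc_mul (n m : ℕ) (u v : Fin m → Fin n) (p : Fin n → Fin 3 → ℝ)
    (k : Fin m) (i : Fin n) (s : Fin 3) :
    rigidityMatrix n m u v p k (i, s) = incidence n m u v i k * edgeDiff n m u v p s k := by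
  simp only [rigidityMatrix, incidence, edgeDiff, Matrix.of_apply]
  by_cases h1 : i = u k <;> by_cases h2 : i = v k <;>
    simp [h1, h2]

/-- The symmetric rigidity matrix `𝓡 = R(p,W)ᵀ R(p,W)` of a weighted framework in ℝ³ is
similar, via the permutation `P` of rows and columns collecting first the `x`, then the
`y`, then the `z` coordinates, to `(I₃ ⊗ E(G)W) Q(p) (I₃ ⊗ W E(G)ᵀ)`:
`P 𝓡 Pᵀ = (I₃ ⊗ E(G)W) Q(p) (I₃ ⊗ W E(G)ᵀ)`. -/
theorem symRigidity_permuted_eq_weightedLapForm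
    (n m : ℕ) (u v : Fin m → Fin n) (p : Fin n → Fin 3 → ℝ) (w : Fin m → ℝ) :
    ((weightedRigidityMatrix n m u v p w)ᵀ * weightedRigidityMatrix n m u v p w).submatrix
        (fun si : Fin 3 × Fin n => (si.2, si.1)) (fun tj : Fin 3 × Fin n => (tj.2, tj.1))
      = weightedLapForm n m u v p w := by
  ext ⟨s, i⟩ ⟨t, j⟩
  simp only [Matrix.submatrix_apply, Matrix.mul_apply, Matrix.transpose_apply,
    weightedLapForm, weightedRigidityMatrix, Matrix.of_apply]
  refine Finset.sum_congr rfl fun k _ => ?_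
  simp only [Matrix.mul_apply, Matrix.diagonal_apply, ite_mul, zero_mul,
    Finset.sum_ite_eq, Finset.mem_univ, if_true, rigidity_eq_inc_mul]
  ring
end

section
/- In the power-iteration estimator dynamics v̇ = −(k_1 T T^T + k_2 𝓡 + k_3 (v^T v / (3n) − 1) I) v, if the initial condition has ‖v(t_0)‖ ≤ max{‖v(t_0)‖, √(3n)}, then ‖v(t)‖ ≤ max{‖v(t_0)‖, √(3n)} for all t ≥ t_0, for any positive gains k_1, k_2, k_3. -/
open Matrix

/-- Norm boundedness of the power-iteration estimator dynamics
`v̇ = −(k₁ T Tᵀ + k₂ 𝓡 + k₃ (vᵀv/(3n) − 1) I) v`: for any positive gains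
`k₁, k₂, k₃` and any solution, `‖v(t)‖ ≤ max{‖v(t₀)‖, √(3n)}` for all `t ≥ t₀`. -/
theorem power_iteration_norm_bound
    (n : ℕ) (R : Matrix (Fin (3 * n)) (Fin (3 * n)) ℝ) (T : Matrix (Fin (3 * n)) (Fin 6) ℝ)
    (hsym : R.IsSymm) (hpsd : ∀ x : Fin (3 * n) → ℝ, 0 ≤ x ⬝ᵥ R.mulVec x)
    (k1 k2 k3 : ℝ) (hk1 : 0 < k1) (hk2 : 0 < k2) (hk3 : 0 < k3)
    (v : ℝ → (Fin (3 * n) → ℝ)) (t0 : ℝ)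
    (hode : ∀ t : ℝ, HasDerivAt v
      (-(k1 • (T * Tᵀ).mulVec (v t) + k2 • R.mulVec (v t) +
          (k3 * ((v t ⬝ᵥ v t) / ((3 * n : ℕ) : ℝ) - 1)) • v t)) t) :
    ∀ t : ℝ, t0 ≤ t →
      Real.sqrt (v t ⬝ᵥ v t) ≤
        max (Real.sqrt (v t0 ⬝ᵥ v t0)) (Real.sqrt ((3 * n : ℕ) : ℝ)) := by
  intro t1 ht1
  rcases Nat.eq_zero_or_pos n with hn | hn
  · subst hn
    simp [dotProduct]
  have hN : (0:ℝ) < ((3 * n : ℕ) : ℝ) := by positivity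
  set N : ℝ := ((3 * n : ℕ) : ℝ) with hNdef
  set f : ℝ → ℝ := fun t => v t ⬝ᵥ v t with hfdef
  set w : ℝ → (Fin (3*n) → ℝ) := fun t =>
      -(k1 • (T * Tᵀ).mulVec (v t) + k2 • R.mulVec (v t) +
          (k3 * ((v t ⬝ᵥ v t) / N - 1)) • v t) with hwdef
  have hf' : ∀ t, HasDerivAt f (2 * (v t ⬝ᵥ w t)) t := by
    intro t
    have hcomp : ∀ i, HasDerivAt (fun s => v s i) (w t i) t :=
      fun i => hasDerivAt_pi.1 (hode t) i
    have hsum : HasDerivAt (fun s => ∑ i, v s i * v s i)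
        (∑ i, (w t i * v t i + v t i * w t i)) t :=
      HasDerivAt.fun_sum fun i _ => (hcomp i).mul (hcomp i)
    have heq : (∑ i, (w t i * v t i + v t i * w t i)) = 2 * (v t ⬝ᵥ w t) := by
      simp only [dotProduct, Finset.mul_sum]
      exact Finset.sum_congr rfl fun i _ => by ring
    rw [heq] at hsum
    exact hsum
  have hsign : ∀ t, N ≤ f t → 2 * (v t ⬝ᵥ w t) ≤ 0 := by
    intro t ht
    have h1 : 0 ≤ v t ⬝ᵥ (T * Tᵀ).mulVec (v t) := by
      rw [← Matrix.mulVec_mulVec, Matrix.dotProduct_mulVec, ← Matrix.mulVec_transpose]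
      exact Finset.sum_nonneg fun i _ => mul_self_nonneg _
    have h2 : 0 ≤ v t ⬝ᵥ R.mulVec (v t) := hpsd _
    have h3 : 0 ≤ (k3 * ((v t ⬝ᵥ v t) / N - 1)) * (v t ⬝ᵥ v t) := by
      have hft : 0 ≤ f t := le_trans hN.le ht
      have hd : 0 ≤ (v t ⬝ᵥ v t) / N - 1 := by
        rw [sub_nonneg, le_div_iff₀ hN]
        simpa [hfdef] using ht
      have := mul_nonneg (mul_nonneg hk3.le hd) hft
      simpa [hfdef] using this
    have hle : v t ⬝ᵥ w t ≤ 0 := by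
      rw [hwdef]
      simp only [dotProduct_neg, dotProduct_add, dotProduct_smul, smul_eq_mul]
      nlinarith
    linarith
  have key : ∀ ε > (0:ℝ), f t1 ≤ max (f t0) N + ε * (t1 - t0) := by
    intro ε hε
    have hcont : ContinuousOn f (Set.Icc t0 t1) :=
      HasDerivAt.continuousOn (fun x _ => hf' x)
    have hmain := image_le_of_deriv_right_lt_deriv_boundary (f := f)
      (f' := fun t => 2 * (v t ⬝ᵥ w t)) (a := t0) (b := t1)
      (B := fun x => max (f t0) N + ε * (x - t0)) (B' := fun _ => ε)
      hcont (fun x _ => (hf' x).hasDerivWithinAt)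
      (by simp [le_max_left])
      (fun x => by
        have h1 : HasDerivAt (fun x : ℝ => x - t0) 1 x := (hasDerivAt_id' x).sub_const t0
        have h3 := (h1.const_mul ε).const_add (max (f t0) N)
        simpa using h3)
      (fun x hx hfx => by
        have hfx' : f x = max (f t0) N + ε * (x - t0) := hfx
        have hNx : N ≤ f x := by
          have h0 : (0:ℝ) ≤ ε * (x - t0) := mul_nonneg hε.le (by linarith [hx.1])
          have := le_max_right (f t0) N
          linarith
        exact lt_of_le_of_lt (hsign x hNx) hε)
    exact hmain (Set.right_mem_Icc.2 ht1)
  have hfle : f t1 ≤ max (f t0) N := by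
    apply le_of_forall_pos_le_add
    intro δ hδ
    have hd : (0:ℝ) < t1 - t0 + 1 := by linarith
    have hε : 0 < δ / (t1 - t0 + 1) := div_pos hδ hd
    have hk := key _ hε
    have h2 : δ / (t1 - t0 + 1) * (t1 - t0) ≤ δ := by
      rw [div_mul_eq_mul_div, div_le_iff₀ hd]
      nlinarith
    linarith
  rcases max_cases (f t0) N with ⟨he, _⟩ | ⟨he, _⟩
  · exact le_trans (Real.sqrt_le_sqrt (hfle.trans_eq he)) (le_max_left _ _)
  · exact le_trans (Real.sqrt_le_sqrt (hfle.trans_eq he)) (le_max_right _ _)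
end
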